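/- Fix a ∈ 𝒜 with P(Y⁰=0, A=a) > 0 and P(Y⁰=0, S=1) > 0, and assume: consistency (P-almost surely, if D = 0 then Y = Y⁰); ignorability (for all a' ∈ 𝒜, x ∈ 𝒳, and s, y, d ∈ {0,1} with P(A=a', X=x, S=s) > 0, P(Y⁰=y, D=d | A=a', X=x, S=s) = P(Y⁰=y | A=a', X=x, S=s) · P(D=d | A=a', X=x, S=s)); positivity (P(D=0, A=a', X=x, S=s) > 0 whenever P(A=a', X=x, S=s) > 0); Y⁰ is conditionally independent of (A, D) given (X, S) (for all y, d, a', x, s with P(X=x, S=s) > 0, P(Y⁰=y, A=a', D=d | X=x, S=s) = P(Y⁰=y | X=x, S=s) · P(A=a', D=d | X=x, S=s)); Y⁰ is conditionally independent of (A, D) given X (for all y, d, a', x with P(X=x) > 0, P(Y⁰=y, A=a', D=d | X=x) = P(Y⁰=y | X=x) · P(A=a', D=d | X=x)); positivity given (X,S) (P(D=0, S=s, X=x) > 0 whenever P(S=s, X=x) > 0); and positivity given X (P(D=0, X=x) > 0 whenever P(X=x) > 0). Then the group-specific counterfactual false positive rate is fully identified from the observed data as: P(S=1 | Y⁰=0,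 A=a) = ( E[1{D=0}·1{S=1}·1{Y=0}/(1−π(A,X,S))] / E[1{D=0}·1{Y=0}/(1−π(A,X,S))] ) · ( E[μ₀(0,1,X)·1{A=a}·1{S=1}] / E[μ₀(0,1,X)·1{S=1}] ) / ( E[μ₀*(0,X)·h(X,a)] / E[μ₀*(0,X)] ). -/

import Mathlib

open MeasureTheory

/-- `pr P E` is the probability of the event `E` as a real number. -/
noncomputable def pr {Ω : Type*} [MeasurableSpace Ω] (P : Measure Ω) (E : Set Ω) : ℝ :=
  (P E).toReal

/-- `cpr P E F = P(E | F) = P(E ∩ F) / P(F)`, the conditional probability of `E` given `F`. -/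
noncomputable def cpr {Ω : Type*} [MeasurableSpace Ω] (P : Measure Ω) (E F : Set Ω) : ℝ :=
  pr P (E ∩ F) / pr P F

section Helpers
variable {Ω : Type*} [MeasurableSpace Ω] (P : Measure Ω)

lemma pr_nonneg (E : Set Ω) : 0 ≤ pr P E := ENNReal.toReal_nonneg

lemma pr_congr {E F : Set Ω} (h : ∀ ω, ω ∈ E ↔ ω ∈ F) : pr P E = pr P F := by
  unfold pr; rw [Set.ext h]

lemma pr_mono [IsFiniteMeasure P] {E F : Set Ω} (h : E ⊆ F) : pr P E ≤ pr P F :=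
  ENNReal.toReal_mono (measure_ne_top P F) (measure_mono h)

lemma pr_zero_of_subset [IsFiniteMeasure P] {E F : Set Ω} (h : E ⊆ F) (hF : pr P F = 0) :
    pr P E = 0 := le_antisymm (hF ▸ pr_mono P h) (pr_nonneg P E)

lemma pr_tsum_fiber [IsFiniteMeasure P] {β : Type*} [MeasurableSpace β]
    [MeasurableSingletonClass β] [Countable β]
    {E : Set Ω} (hE : MeasurableSet E) {f : Ω → β} (hf : Measurable f) :
    ∑' b, pr P {ω | ω ∈ E ∧ f ω = b} = pr P E := by
  have hset : ∀ b : β, {ω | ω ∈ E ∧ f ω = b} = E ∩ f ⁻¹' {b} := fun b => rfl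
  have hmeas : ∀ b : β, MeasurableSet (E ∩ f ⁻¹' {b}) :=
    fun b => hE.inter (hf (measurableSet_singleton b))
  have hdisj : Pairwise (Function.onFun Disjoint fun b => E ∩ f ⁻¹' {b}) := by
    intro b c hbc
    refine Set.disjoint_left.2 ?_
    rintro ω ⟨-, h1⟩ ⟨-, h2⟩
    exact hbc (h1.symm.trans h2)
  have hunion : (⋃ b, E ∩ f ⁻¹' {b}) = E := by ext ω; simp
  calc ∑' b, pr P {ω | ω ∈ E ∧ f ω = b}
      = ∑' b, (P (E ∩ f ⁻¹' {b})).toReal := by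
        refine tsum_congr fun b => ?_
        rw [hset b]; rfl
    _ = (∑' b, P (E ∩ f ⁻¹' {b})).toReal :=
        (ENNReal.tsum_toReal_eq fun b => measure_ne_top P _).symm
    _ = (P (⋃ b, E ∩ f ⁻¹' {b})).toReal := by rw [measure_iUnion hdisj hmeas]
    _ = pr P E := by rw [hunion]; rfl

lemma pr_bool_split [IsFiniteMeasure P] {E : Set Ω} (hE : MeasurableSet E)
    {g : Ω → Bool} (hg : Measurable g) :
    pr P {ω | ω ∈ E ∧ g ω = false} + pr P {ω | ω ∈ E ∧ g ω = true} = pr P E := by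
  rw [← pr_tsum_fiber P hE hg, tsum_bool]

end Helpers

/-- under consistency, ignorability, positivity, conditional independence of `Y⁰`
and `(A, D)` given `(X, S)` and given `X`, and positivity given `(X, S)` and given `X`, the
group-specific counterfactual false positive rate is fully identified from the observed data as
`P(S=1 | Y⁰=0, A=a) =
  (E[1{D=0}·1{S=1}·1{Y=0}/(1−π(A,X,S))] / E[1{D=0}·1{Y=0}/(1−π(A,X,S))]) ·
  (E[μ₀(0,1,X)·1{A=a}·1{S=1}] / E[μ₀(0,1,X)·1{S=1}]) /
  (E[μ₀*(0,X)·h(X,a)] / E[μ₀*(0,X)])`,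
where `π(a,x,s) = P(D=1 | A=a, X=x, S=s)`, `μ₀(y,s,x) = P(Y=y | D=0, S=s, X=x)`,
`μ₀*(y,x) = P(Y=y | D=0, X=x)`, `h(x,a) = P(A=a | X=x)`, and all expectations are the
corresponding series over the countable level sets (the indicator `1{S=1}` in the IPW numerator
is encoded by also requiring `S ω = true` in the event).
Binary variables are modelled as `Bool`-valued, with `1 = true` and `0 = false`. -/
theorem stmt_16
    {Ω 𝒜 𝒳 : Type*} [MeasurableSpace Ω]
    [MeasurableSpace 𝒜] [MeasurableSingletonClass 𝒜] [Countable 𝒜] [Nonempty 𝒜]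
    [MeasurableSpace 𝒳] [MeasurableSingletonClass 𝒳] [Countable 𝒳] [Nonempty 𝒳]
    (P : Measure Ω) [IsProbabilityMeasure P]
    (Y0 Y D S : Ω → Bool) (A : Ω → 𝒜) (X : Ω → 𝒳)
    (hY0 : Measurable Y0) (hY : Measurable Y) (hD : Measurable D) (hS : Measurable S)
    (hA : Measurable A) (hX : Measurable X)
    (a : 𝒜)
    (hpos1 : 0 < pr P {ω | Y0 ω = false ∧ A ω = a})
    (hpos2 : 0 < pr P {ω | Y0 ω = false ∧ S ω = true})
    (hcons : ∀ᵐ ω ∂P, D ω = false → Y ω = Y0 ω)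
    (hig : ∀ (a' : 𝒜) (x : 𝒳) (s y d : Bool),
      0 < pr P {ω | A ω = a' ∧ X ω = x ∧ S ω = s} →
      cpr P {ω | Y0 ω = y ∧ D ω = d} {ω | A ω = a' ∧ X ω = x ∧ S ω = s} =
        cpr P {ω | Y0 ω = y} {ω | A ω = a' ∧ X ω = x ∧ S ω = s} *
          cpr P {ω | D ω = d} {ω | A ω = a' ∧ X ω = x ∧ S ω = s})
    (hposD : ∀ (a' : 𝒜) (x : 𝒳) (s : Bool),
      0 < pr P {ω | A ω = a' ∧ X ω = x ∧ S ω = s} →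
      0 < pr P {ω | D ω = false ∧ A ω = a' ∧ X ω = x ∧ S ω = s})
    (hCIS : ∀ (y d : Bool) (a' : 𝒜) (x : 𝒳) (s : Bool),
      0 < pr P {ω | X ω = x ∧ S ω = s} →
      cpr P {ω | Y0 ω = y ∧ A ω = a' ∧ D ω = d} {ω | X ω = x ∧ S ω = s} =
        cpr P {ω | Y0 ω = y} {ω | X ω = x ∧ S ω = s} *
          cpr P {ω | A ω = a' ∧ D ω = d} {ω | X ω = x ∧ S ω = s})
    (hCIX : ∀ (y d : Bool) (a' : 𝒜) (x : 𝒳), 0 < pr P {ω | X ω = x} →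
      cpr P {ω | Y0 ω = y ∧ A ω = a' ∧ D ω = d} {ω | X ω = x} =
        cpr P {ω | Y0 ω = y} {ω | X ω = x} *
          cpr P {ω | A ω = a' ∧ D ω = d} {ω | X ω = x})
    (hposDS : ∀ (s : Bool) (x : 𝒳), 0 < pr P {ω | S ω = s ∧ X ω = x} →
      0 < pr P {ω | D ω = false ∧ S ω = s ∧ X ω = x})
    (hposDX : ∀ x : 𝒳, 0 < pr P {ω | X ω = x} →
      0 < pr P {ω | D ω = false ∧ X ω = x}) :
    cpr P {ω | S ω = true} {ω | Y0 ω = false ∧ A ω = a} =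
      ((∑' (a' : 𝒜) (x : 𝒳) (s : Bool),
          pr P {ω | D ω = false ∧ S ω = true ∧ Y ω = false ∧ A ω = a' ∧ X ω = x ∧ S ω = s} /
            (1 - cpr P {ω | D ω = true} {ω | A ω = a' ∧ X ω = x ∧ S ω = s})) /
        (∑' (a' : 𝒜) (x : 𝒳) (s : Bool),
            pr P {ω | D ω = false ∧ Y ω = false ∧ A ω = a' ∧ X ω = x ∧ S ω = s} /
              (1 - cpr P {ω | D ω = true} {ω | A ω = a' ∧ X ω = x ∧ S ω = s}))) *
      ((∑' x : 𝒳,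
          cpr P {ω | Y ω = false} {ω | D ω = false ∧ S ω = true ∧ X ω = x} *
            pr P {ω | A ω = a ∧ S ω = true ∧ X ω = x}) /
        (∑' x : 𝒳,
            cpr P {ω | Y ω = false} {ω | D ω = false ∧ S ω = true ∧ X ω = x} *
              pr P {ω | S ω = true ∧ X ω = x})) /
      ((∑' x : 𝒳,
          cpr P {ω | Y ω = false} {ω | D ω = false ∧ X ω = x} *
            cpr P {ω | A ω = a} {ω | X ω = x} * pr P {ω | X ω = x}) /
        (∑' x : 𝒳,
            cpr P {ω | Y ω = false} {ω | D ω = false ∧ X ω = x} * pr P {ω | X ω = x})) := by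
  classical
  have prE : ∀ (E F : Set Ω), (∀ ω, ω ∈ E ↔ ω ∈ F) → pr P E = pr P F :=
    fun _ _ h => pr_congr P h
  have mA : ∀ a' : 𝒜, MeasurableSet {ω | A ω = a'} := fun a' => hA (measurableSet_singleton a')
  have mX' : ∀ x : 𝒳, MeasurableSet {ω | X ω = x} := fun x => hX (measurableSet_singleton x)
  have mS' : ∀ s : Bool, MeasurableSet {ω | S ω = s} := fun s => hS (measurableSet_singleton s)
  have mD' : ∀ s : Bool, MeasurableSet {ω | D ω = s} := fun s => hD (measurableSet_singleton s)
  have mY : ∀ s : Bool, MeasurableSet {ω | Y0 ω = s} := fun s => hY0 (measurableSet_singleton s)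
  -- consistency
  have hconsP : ∀ (C : Ω → Prop),
      pr P {ω | D ω = false ∧ Y ω = false ∧ C ω} =
      pr P {ω | Y0 ω = false ∧ D ω = false ∧ C ω} := by
    intro C
    unfold pr
    congr 1
    apply measure_congr
    rw [Filter.eventuallyEq_set]
    filter_upwards [hcons] with ω h
    constructor
    · rintro ⟨h1, h2, h3⟩; exact ⟨by rw [← h h1]; exact h2, h1, h3⟩
    · rintro ⟨h1, h2, h3⟩; exact ⟨h2, by rw [h h2]; exact h1, h3⟩
  ---------------------------------------------------------------- key1
  have key1 : ∀ (a' : 𝒜) (x : 𝒳) (s : Bool),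
      pr P {ω | D ω = false ∧ Y ω = false ∧ A ω = a' ∧ X ω = x ∧ S ω = s} /
        (1 - cpr P {ω | D ω = true} {ω | A ω = a' ∧ X ω = x ∧ S ω = s}) =
      pr P {ω | Y0 ω = false ∧ A ω = a' ∧ X ω = x ∧ S ω = s} := by
    intro a' x s
    by_cases hp : 0 < pr P {ω | A ω = a' ∧ X ω = x ∧ S ω = s}
    · have hq0 := hposD a' x s hp
      have hnum : pr P {ω | D ω = false ∧ Y ω = false ∧ A ω = a' ∧ X ω = x ∧ S ω = s} =
          pr P {ω | Y0 ω = false ∧ D ω = false ∧ A ω = a' ∧ X ω = x ∧ S ω = s} :=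
        hconsP fun ω => A ω = a' ∧ X ω = x ∧ S ω = s
      have hsplit : pr P {ω | D ω = false ∧ A ω = a' ∧ X ω = x ∧ S ω = s} +
          pr P {ω | D ω = true ∧ A ω = a' ∧ X ω = x ∧ S ω = s} =
          pr P {ω | A ω = a' ∧ X ω = x ∧ S ω = s} := by
        have hb := pr_bool_split P (E := {ω | A ω = a' ∧ X ω = x ∧ S ω = s})
          ((mA a').inter ((mX' x).inter (mS' s))) hD
        have e1 : pr P {ω | ω ∈ {ω | A ω = a' ∧ X ω = x ∧ S ω = s} ∧ D ω = false} =
            pr P {ω | D ω = false ∧ A ω = a' ∧ X ω = x ∧ S ω = s} :=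
          prE _ _ (fun ω => by simp only [Set.mem_setOf_eq]; try tauto)
        have e2 : pr P {ω | ω ∈ {ω | A ω = a' ∧ X ω = x ∧ S ω = s} ∧ D ω = true} =
            pr P {ω | D ω = true ∧ A ω = a' ∧ X ω = x ∧ S ω = s} :=
          prE _ _ (fun ω => by simp only [Set.mem_setOf_eq]; try tauto)
        linarith [hb, e1, e2]
      have hpi : 1 - cpr P {ω | D ω = true} {ω | A ω = a' ∧ X ω = x ∧ S ω = s} =
          pr P {ω | D ω = false ∧ A ω = a' ∧ X ω = x ∧ S ω = s} /
            pr P {ω | A ω = a' ∧ X ω = x ∧ S ω = s} := by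
        have e1 : pr P ({ω | D ω = true} ∩ {ω | A ω = a' ∧ X ω = x ∧ S ω = s}) =
            pr P {ω | D ω = true ∧ A ω = a' ∧ X ω = x ∧ S ω = s} :=
          prE _ _ (fun ω => by simp only [Set.mem_inter_iff, Set.mem_setOf_eq]; try tauto)
        unfold cpr
        rw [e1]
        rw [sub_eq_iff_eq_add, ← add_div, eq_div_iff (ne_of_gt hp), one_mul]
        linarith [hsplit]
      rw [hnum, hpi]
      have hig' := hig a' x s false false hp
      unfold cpr at hig'
      have e2 : pr P ({ω | Y0 ω = false ∧ D ω = false} ∩ {ω | A ω = a' ∧ X ω = x ∧ S ω = s}) =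
          pr P {ω | Y0 ω = false ∧ D ω = false ∧ A ω = a' ∧ X ω = x ∧ S ω = s} :=
        prE _ _ (fun ω => by simp only [Set.mem_inter_iff, Set.mem_setOf_eq]; try tauto)
      have e3 : pr P ({ω | Y0 ω = false} ∩ {ω | A ω = a' ∧ X ω = x ∧ S ω = s}) =
          pr P {ω | Y0 ω = false ∧ A ω = a' ∧ X ω = x ∧ S ω = s} :=
        prE _ _ (fun ω => by simp only [Set.mem_inter_iff, Set.mem_setOf_eq]; try tauto)
      have e4 : pr P ({ω | D ω = false} ∩ {ω | A ω = a' ∧ X ω = x ∧ S ω = s}) =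
          pr P {ω | D ω = false ∧ A ω = a' ∧ X ω = x ∧ S ω = s} :=
        prE _ _ (fun ω => by simp only [Set.mem_inter_iff, Set.mem_setOf_eq]; try tauto)
      rw [e2, e3, e4] at hig'
      have hpne := ne_of_gt hp
      field_simp at hig'
      rw [div_div_eq_mul_div, div_eq_iff (ne_of_gt hq0)]
      apply mul_right_cancel₀ hpne
      linear_combination (pr P {ω | A ω = a' ∧ X ω = x ∧ S ω = s}) * hig'
    · have hp0 : pr P {ω | A ω = a' ∧ X ω = x ∧ S ω = s} = 0 :=
        le_antisymm (not_lt.1 hp) (pr_nonneg P _)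
      have h1 : pr P {ω | D ω = false ∧ Y ω = false ∧ A ω = a' ∧ X ω = x ∧ S ω = s} = 0 :=
        pr_zero_of_subset P (fun ω hω => hω.2.2) hp0
      have h2 : pr P {ω | Y0 ω = false ∧ A ω = a' ∧ X ω = x ∧ S ω = s} = 0 :=
        pr_zero_of_subset P (fun ω hω => hω.2) hp0
      rw [h1, h2, zero_div]
  ---------------------------------------------------------------- key1'
  have key1' : ∀ (a' : 𝒜) (x : 𝒳) (s : Bool),
      pr P {ω | D ω = false ∧ S ω = true ∧ Y ω = false ∧ A ω = a' ∧ X ω = x ∧ S ω = s} /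
        (1 - cpr P {ω | D ω = true} {ω | A ω = a' ∧ X ω = x ∧ S ω = s}) =
      pr P {ω | ω ∈ {ω | Y0 ω = false ∧ S ω = true ∧ A ω = a' ∧ X ω = x} ∧ S ω = s} := by
    intro a' x s
    cases s
    · have h1 : pr P {ω | D ω = false ∧ S ω = true ∧ Y ω = false ∧ A ω = a' ∧ X ω = x ∧
          S ω = false} = 0 := by
        rw [prE _ (∅ : Set Ω) (fun ω => by
          simp only [Set.mem_setOf_eq, Set.mem_empty_iff_false]
          constructor
          · rintro ⟨-, h2, -, -, -, h6⟩; rw [h2] at h6; exact Bool.noConfusion h6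
          · exact False.elim)]
        unfold pr; simp
      have h2 : pr P {ω | ω ∈ {ω | Y0 ω = false ∧ S ω = true ∧ A ω = a' ∧ X ω = x} ∧
          S ω = false} = 0 := by
        rw [prE _ (∅ : Set Ω) (fun ω => by
          simp only [Set.mem_setOf_eq, Set.mem_empty_iff_false]
          constructor
          · rintro ⟨⟨-, h2, -, -⟩, h6⟩; rw [h2] at h6; exact Bool.noConfusion h6
          · exact False.elim)]
        unfold pr; simp
      rw [h1, h2, zero_div]
    · have e1 : pr P {ω | D ω = false ∧ S ω = true ∧ Y ω = false ∧ A ω = a' ∧ X ω = x ∧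
          S ω = true} =
          pr P {ω | D ω = false ∧ Y ω = false ∧ A ω = a' ∧ X ω = x ∧ S ω = true} :=
        prE _ _ (fun ω => by simp only [Set.mem_setOf_eq]; try tauto)
      have e2 : pr P {ω | Y0 ω = false ∧ A ω = a' ∧ X ω = x ∧ S ω = true} =
          pr P {ω | ω ∈ {ω | Y0 ω = false ∧ S ω = true ∧ A ω = a' ∧ X ω = x} ∧ S ω = true} :=
        prE _ _ (fun ω => by simp only [Set.mem_setOf_eq]; try tauto)
      rw [e1, ← e2]
      exact key1 a' x true
  ---------------------------------------------------------------- N1 sum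
  have hN1 : (∑' (a' : 𝒜) (x : 𝒳) (s : Bool),
      pr P {ω | D ω = false ∧ S ω = true ∧ Y ω = false ∧ A ω = a' ∧ X ω = x ∧ S ω = s} /
        (1 - cpr P {ω | D ω = true} {ω | A ω = a' ∧ X ω = x ∧ S ω = s})) =
      pr P {ω | Y0 ω = false ∧ S ω = true} := by
    have h1 : ∀ (a' : 𝒜) (x : 𝒳), (∑' (s : Bool),
        pr P {ω | D ω = false ∧ S ω = true ∧ Y ω = false ∧ A ω = a' ∧ X ω = x ∧ S ω = s} /
          (1 - cpr P {ω | D ω = true} {ω | A ω = a' ∧ X ω = x ∧ S ω = s})) =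
        pr P {ω | Y0 ω = false ∧ S ω = true ∧ A ω = a' ∧ X ω = x} := by
      intro a' x
      exact (tsum_congr (key1' a' x)).trans
        (pr_tsum_fiber P (E := {ω | Y0 ω = false ∧ S ω = true ∧ A ω = a' ∧ X ω = x})
          ((mY false).inter ((mS' true).inter ((mA a').inter (mX' x)))) hS)
    have h2 : ∀ (a' : 𝒜), (∑' (x : 𝒳) (s : Bool),
        pr P {ω | D ω = false ∧ S ω = true ∧ Y ω = false ∧ A ω = a' ∧ X ω = x ∧ S ω = s} /
          (1 - cpr P {ω | D ω = true} {ω | A ω = a' ∧ X ω = x ∧ S ω = s})) =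
        pr P {ω | Y0 ω = false ∧ S ω = true ∧ A ω = a'} := by
      intro a'
      refine (tsum_congr fun x => (h1 a' x).trans (prE _
        {ω | ω ∈ {ω | Y0 ω = false ∧ S ω = true ∧ A ω = a'} ∧ X ω = x}
        (fun ω => by simp only [Set.mem_setOf_eq]; try tauto))).trans ?_
      exact pr_tsum_fiber P (E := {ω | Y0 ω = false ∧ S ω = true ∧ A ω = a'})
        ((mY false).inter ((mS' true).inter (mA a'))) hX
    refine (tsum_congr fun a' => (h2 a').trans (prE _
      {ω | ω ∈ {ω | Y0 ω = false ∧ S ω = true} ∧ A ω = a'}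
      (fun ω => by simp only [Set.mem_setOf_eq]; try tauto))).trans ?_
    exact pr_tsum_fiber P (E := {ω | Y0 ω = false ∧ S ω = true})
      ((mY false).inter (mS' true)) hA
  ---------------------------------------------------------------- D1 sum
  have hD1 : (∑' (a' : 𝒜) (x : 𝒳) (s : Bool),
      pr P {ω | D ω = false ∧ Y ω = false ∧ A ω = a' ∧ X ω = x ∧ S ω = s} /
        (1 - cpr P {ω | D ω = true} {ω | A ω = a' ∧ X ω = x ∧ S ω = s})) =
      pr P {ω | Y0 ω = false} := by
    have h1 : ∀ (a' : 𝒜) (x : 𝒳), (∑' (s : Bool),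
        pr P {ω | D ω = false ∧ Y ω = false ∧ A ω = a' ∧ X ω = x ∧ S ω = s} /
          (1 - cpr P {ω | D ω = true} {ω | A ω = a' ∧ X ω = x ∧ S ω = s})) =
        pr P {ω | Y0 ω = false ∧ A ω = a' ∧ X ω = x} := by
      intro a' x
      refine (tsum_congr fun s => (key1 a' x s).trans (prE _
        {ω | ω ∈ {ω | Y0 ω = false ∧ A ω = a' ∧ X ω = x} ∧ S ω = s}
        (fun ω => by simp only [Set.mem_setOf_eq]; try tauto))).trans ?_
      exact pr_tsum_fiber P (E := {ω | Y0 ω = false ∧ A ω = a' ∧ X ω = x})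
        ((mY false).inter ((mA a').inter (mX' x))) hS
    have h2 : ∀ (a' : 𝒜), (∑' (x : 𝒳) (s : Bool),
        pr P {ω | D ω = false ∧ Y ω = false ∧ A ω = a' ∧ X ω = x ∧ S ω = s} /
          (1 - cpr P {ω | D ω = true} {ω | A ω = a' ∧ X ω = x ∧ S ω = s})) =
        pr P {ω | Y0 ω = false ∧ A ω = a'} := by
      intro a'
      refine (tsum_congr fun x => (h1 a' x).trans (prE _
        {ω | ω ∈ {ω | Y0 ω = false ∧ A ω = a'} ∧ X ω = x}
        (fun ω => by simp only [Set.mem_setOf_eq]; try tauto))).trans ?_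
      exact pr_tsum_fiber P (E := {ω | Y0 ω = false ∧ A ω = a'})
        ((mY false).inter (mA a')) hX
    refine (tsum_congr fun a' => (h2 a').trans (prE _
      {ω | ω ∈ {ω | Y0 ω = false} ∧ A ω = a'}
      (fun ω => by simp only [Set.mem_setOf_eq]; try tauto))).trans ?_
    exact pr_tsum_fiber P (E := {ω | Y0 ω = false}) (mY false) hA
  ---------------------------------------------------------------- key2
  have key2 : ∀ x : 𝒳,
      cpr P {ω | Y ω = false} {ω | D ω = false ∧ S ω = true ∧ X ω = x} *
        pr P {ω | A ω = a ∧ S ω = true ∧ X ω = x} =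
        pr P {ω | ω ∈ {ω | Y0 ω = false ∧ A ω = a ∧ S ω = true} ∧ X ω = x} ∧
      cpr P {ω | Y ω = false} {ω | D ω = false ∧ S ω = true ∧ X ω = x} *
        pr P {ω | S ω = true ∧ X ω = x} =
        pr P {ω | ω ∈ {ω | Y0 ω = false ∧ S ω = true} ∧ X ω = x} := by
    intro x
    by_cases hq : 0 < pr P {ω | X ω = x ∧ S ω = true}
    · have hqne := ne_of_gt hq
      have hprod : ∀ (a'' : 𝒜) (d : Bool),
          pr P {ω | Y0 ω = false ∧ A ω = a'' ∧ D ω = d ∧ X ω = x ∧ S ω = true} =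
            pr P {ω | Y0 ω = false ∧ X ω = x ∧ S ω = true} /
              pr P {ω | X ω = x ∧ S ω = true} *
              pr P {ω | A ω = a'' ∧ D ω = d ∧ X ω = x ∧ S ω = true} := by
        intro a'' d
        have h := hCIS false d a'' x true hq
        unfold cpr at h
        rw [prE ({ω | Y0 ω = false ∧ A ω = a'' ∧ D ω = d} ∩ {ω | X ω = x ∧ S ω = true})
              {ω | Y0 ω = false ∧ A ω = a'' ∧ D ω = d ∧ X ω = x ∧ S ω = true}
              (fun ω => by simp only [Set.mem_inter_iff, Set.mem_setOf_eq]; try tauto),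
            prE ({ω | Y0 ω = false} ∩ {ω | X ω = x ∧ S ω = true})
              {ω | Y0 ω = false ∧ X ω = x ∧ S ω = true}
              (fun ω => by simp only [Set.mem_inter_iff, Set.mem_setOf_eq]; try tauto),
            prE ({ω | A ω = a'' ∧ D ω = d} ∩ {ω | X ω = x ∧ S ω = true})
              {ω | A ω = a'' ∧ D ω = d ∧ X ω = x ∧ S ω = true}
              (fun ω => by simp only [Set.mem_inter_iff, Set.mem_setOf_eq]; try tauto)] at h
        field_simp at h
        rw [div_mul_eq_mul_div, eq_div_iff hqne]
        apply mul_right_cancel₀ hqne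
        linear_combination (pr P {ω | X ω = x ∧ S ω = true}) * h
      have hsumA : (∑' a'' : 𝒜,
          pr P {ω | A ω = a'' ∧ D ω = false ∧ X ω = x ∧ S ω = true}) =
          pr P {ω | D ω = false ∧ X ω = x ∧ S ω = true} := by
        refine (tsum_congr fun a'' => prE _
          {ω | ω ∈ {ω | D ω = false ∧ X ω = x ∧ S ω = true} ∧ A ω = a''}
          (fun ω => by simp only [Set.mem_setOf_eq]; try tauto)).trans ?_
        exact pr_tsum_fiber P (E := {ω | D ω = false ∧ X ω = x ∧ S ω = true})
          ((mD' false).inter ((mX' x).inter (mS' true))) hA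
      have hYD : pr P {ω | Y0 ω = false ∧ D ω = false ∧ X ω = x ∧ S ω = true} =
          pr P {ω | Y0 ω = false ∧ X ω = x ∧ S ω = true} /
            pr P {ω | X ω = x ∧ S ω = true} *
            pr P {ω | D ω = false ∧ X ω = x ∧ S ω = true} := by
        calc pr P {ω | Y0 ω = false ∧ D ω = false ∧ X ω = x ∧ S ω = true}
            = ∑' a'' : 𝒜, pr P {ω | ω ∈
                {ω | Y0 ω = false ∧ D ω = false ∧ X ω = x ∧ S ω = true} ∧ A ω = a''} :=
              (pr_tsum_fiber P
                (E := {ω | Y0 ω = false ∧ D ω = false ∧ X ω = x ∧ S ω = true})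
                ((mY false).inter ((mD' false).inter ((mX' x).inter (mS' true)))) hA).symm
          _ = ∑' a'' : 𝒜, (pr P {ω | Y0 ω = false ∧ X ω = x ∧ S ω = true} /
                pr P {ω | X ω = x ∧ S ω = true} *
                pr P {ω | A ω = a'' ∧ D ω = false ∧ X ω = x ∧ S ω = true}) :=
              tsum_congr fun a'' => (prE _
                {ω | Y0 ω = false ∧ A ω = a'' ∧ D ω = false ∧ X ω = x ∧ S ω = true}
                (fun ω => by simp only [Set.mem_setOf_eq]; try tauto)).trans (hprod a'' false)
          _ = _ := by rw [tsum_mul_left, hsumA]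
      have hk : 0 < pr P {ω | D ω = false ∧ X ω = x ∧ S ω = true} := by
        have h0 : pr P {ω | S ω = true ∧ X ω = x} = pr P {ω | X ω = x ∧ S ω = true} :=
          prE _ _ (fun ω => by simp only [Set.mem_setOf_eq]; try tauto)
        have h := hposDS true x (by rw [h0]; exact hq)
        have h1 : pr P {ω | D ω = false ∧ S ω = true ∧ X ω = x} =
            pr P {ω | D ω = false ∧ X ω = x ∧ S ω = true} :=
          prE _ _ (fun ω => by simp only [Set.mem_setOf_eq]; try tauto)
        rw [← h1]; exact h
      have hmu : cpr P {ω | Y ω = false} {ω | D ω = false ∧ S ω = true ∧ X ω = x} =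
          pr P {ω | Y0 ω = false ∧ X ω = x ∧ S ω = true} /
            pr P {ω | X ω = x ∧ S ω = true} := by
        unfold cpr
        have eN : pr P ({ω | Y ω = false} ∩ {ω | D ω = false ∧ S ω = true ∧ X ω = x}) =
            pr P {ω | D ω = false ∧ Y ω = false ∧ X ω = x ∧ S ω = true} :=
          prE _ _ (fun ω => by simp only [Set.mem_inter_iff, Set.mem_setOf_eq]; try tauto)
        have eD : pr P {ω | D ω = false ∧ S ω = true ∧ X ω = x} =
            pr P {ω | D ω = false ∧ X ω = x ∧ S ω = true} :=
          prE _ _ (fun ω => by simp only [Set.mem_setOf_eq]; try tauto)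
        rw [eN, eD, hconsP (fun ω => X ω = x ∧ S ω = true), hYD,
          mul_div_cancel_right₀ _ (ne_of_gt hk)]
      have hYA : pr P {ω | Y0 ω = false ∧ A ω = a ∧ X ω = x ∧ S ω = true} =
          pr P {ω | Y0 ω = false ∧ X ω = x ∧ S ω = true} /
            pr P {ω | X ω = x ∧ S ω = true} *
            pr P {ω | A ω = a ∧ X ω = x ∧ S ω = true} := by
        have b1 := pr_bool_split P
          (E := {ω | Y0 ω = false ∧ A ω = a ∧ X ω = x ∧ S ω = true})
          ((mY false).inter ((mA a).inter ((mX' x).inter (mS' true)))) hD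
        have b2 := pr_bool_split P (E := {ω | A ω = a ∧ X ω = x ∧ S ω = true})
          ((mA a).inter ((mX' x).inter (mS' true))) hD
        have c1 : pr P {ω | ω ∈ {ω | Y0 ω = false ∧ A ω = a ∧ X ω = x ∧ S ω = true} ∧
            D ω = false} = pr P {ω | Y0 ω = false ∧ X ω = x ∧ S ω = true} /
              pr P {ω | X ω = x ∧ S ω = true} *
              pr P {ω | A ω = a ∧ D ω = false ∧ X ω = x ∧ S ω = true} :=
          (prE _ {ω | Y0 ω = false ∧ A ω = a ∧ D ω = false ∧ X ω = x ∧ S ω = true}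
            (fun ω => by simp only [Set.mem_setOf_eq]; try tauto)).trans (hprod a false)
        have c2 : pr P {ω | ω ∈ {ω | Y0 ω = false ∧ A ω = a ∧ X ω = x ∧ S ω = true} ∧
            D ω = true} = pr P {ω | Y0 ω = false ∧ X ω = x ∧ S ω = true} /
              pr P {ω | X ω = x ∧ S ω = true} *
              pr P {ω | A ω = a ∧ D ω = true ∧ X ω = x ∧ S ω = true} :=
          (prE _ {ω | Y0 ω = false ∧ A ω = a ∧ D ω = true ∧ X ω = x ∧ S ω = true}
            (fun ω => by simp only [Set.mem_setOf_eq]; try tauto)).trans (hprod a true)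
        have d1 : pr P {ω | ω ∈ {ω | A ω = a ∧ X ω = x ∧ S ω = true} ∧ D ω = false} =
            pr P {ω | A ω = a ∧ D ω = false ∧ X ω = x ∧ S ω = true} :=
          prE _ _ (fun ω => by simp only [Set.mem_setOf_eq]; try tauto)
        have d2 : pr P {ω | ω ∈ {ω | A ω = a ∧ X ω = x ∧ S ω = true} ∧ D ω = true} =
            pr P {ω | A ω = a ∧ D ω = true ∧ X ω = x ∧ S ω = true} :=
          prE _ _ (fun ω => by simp only [Set.mem_setOf_eq]; try tauto)
        rw [← b1, ← b2, c1, c2, d1, d2]; ring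
      constructor
      · rw [hmu,
          prE {ω | A ω = a ∧ S ω = true ∧ X ω = x} {ω | A ω = a ∧ X ω = x ∧ S ω = true}
            (fun ω => by simp only [Set.mem_setOf_eq]; try tauto), ← hYA]
        exact prE _ _ (fun ω => by simp only [Set.mem_setOf_eq]; try tauto)
      · rw [hmu,
          prE {ω | S ω = true ∧ X ω = x} {ω | X ω = x ∧ S ω = true}
            (fun ω => by simp only [Set.mem_setOf_eq]; try tauto),
          div_mul_cancel₀ _ hqne]
        exact prE _ _ (fun ω => by simp only [Set.mem_setOf_eq]; try tauto)
    · have hq0 : pr P {ω | X ω = x ∧ S ω = true} = 0 :=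
        le_antisymm (not_lt.1 hq) (pr_nonneg P _)
      constructor
      · have h1 : pr P {ω | A ω = a ∧ S ω = true ∧ X ω = x} = 0 :=
          pr_zero_of_subset P (fun ω hω => by exact ⟨hω.2.2, hω.2.1⟩) hq0
        have h2 : pr P {ω | ω ∈ {ω | Y0 ω = false ∧ A ω = a ∧ S ω = true} ∧ X ω = x} = 0 :=
          pr_zero_of_subset P (fun ω hω => by exact ⟨hω.2, hω.1.2.2⟩) hq0
        rw [h1, h2, mul_zero]
      · have h1 : pr P {ω | S ω = true ∧ X ω = x} = 0 :=
          pr_zero_of_subset P (fun ω hω => by exact ⟨hω.2, hω.1⟩) hq0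
        have h2 : pr P {ω | ω ∈ {ω | Y0 ω = false ∧ S ω = true} ∧ X ω = x} = 0 :=
          pr_zero_of_subset P (fun ω hω => by exact ⟨hω.2, hω.1.2⟩) hq0
        rw [h1, h2, mul_zero]
  ---------------------------------------------------------------- key3
  have key3 : ∀ x : 𝒳,
      cpr P {ω | Y ω = false} {ω | D ω = false ∧ X ω = x} *
        cpr P {ω | A ω = a} {ω | X ω = x} * pr P {ω | X ω = x} =
        pr P {ω | ω ∈ {ω | Y0 ω = false ∧ A ω = a} ∧ X ω = x} ∧
      cpr P {ω | Y ω = false} {ω | D ω = false ∧ X ω = x} * pr P {ω | X ω = x} =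
        pr P {ω | ω ∈ {ω | Y0 ω = false} ∧ X ω = x} := by
    intro x
    by_cases hq : 0 < pr P {ω | X ω = x}
    · have hqne := ne_of_gt hq
      have hprod : ∀ (a'' : 𝒜) (d : Bool),
          pr P {ω | Y0 ω = false ∧ A ω = a'' ∧ D ω = d ∧ X ω = x} =
            pr P {ω | Y0 ω = false ∧ X ω = x} / pr P {ω | X ω = x} *
              pr P {ω | A ω = a'' ∧ D ω = d ∧ X ω = x} := by
        intro a'' d
        have h := hCIX false d a'' x hq
        unfold cpr at h
        rw [prE ({ω | Y0 ω = false ∧ A ω = a'' ∧ D ω = d} ∩ {ω | X ω = x})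
              {ω | Y0 ω = false ∧ A ω = a'' ∧ D ω = d ∧ X ω = x}
              (fun ω => by simp only [Set.mem_inter_iff, Set.mem_setOf_eq]; try tauto),
            prE ({ω | Y0 ω = false} ∩ {ω | X ω = x}) {ω | Y0 ω = false ∧ X ω = x}
              (fun ω => by simp only [Set.mem_inter_iff, Set.mem_setOf_eq]; try tauto),
            prE ({ω | A ω = a'' ∧ D ω = d} ∩ {ω | X ω = x})
              {ω | A ω = a'' ∧ D ω = d ∧ X ω = x}
              (fun ω => by simp only [Set.mem_inter_iff, Set.mem_setOf_eq]; try tauto)] at h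
        field_simp at h
        rw [div_mul_eq_mul_div, eq_div_iff hqne]
        apply mul_right_cancel₀ hqne
        linear_combination (pr P {ω | X ω = x}) * h
      have hsumA : (∑' a'' : 𝒜, pr P {ω | A ω = a'' ∧ D ω = false ∧ X ω = x}) =
          pr P {ω | D ω = false ∧ X ω = x} := by
        refine (tsum_congr fun a'' => prE _
          {ω | ω ∈ {ω | D ω = false ∧ X ω = x} ∧ A ω = a''}
          (fun ω => by simp only [Set.mem_setOf_eq]; try tauto)).trans ?_
        exact pr_tsum_fiber P (E := {ω | D ω = false ∧ X ω = x})
          ((mD' false).inter (mX' x)) hA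
      have hYD : pr P {ω | Y0 ω = false ∧ D ω = false ∧ X ω = x} =
          pr P {ω | Y0 ω = false ∧ X ω = x} / pr P {ω | X ω = x} *
            pr P {ω | D ω = false ∧ X ω = x} := by
        calc pr P {ω | Y0 ω = false ∧ D ω = false ∧ X ω = x}
            = ∑' a'' : 𝒜, pr P {ω | ω ∈
                {ω | Y0 ω = false ∧ D ω = false ∧ X ω = x} ∧ A ω = a''} :=
              (pr_tsum_fiber P (E := {ω | Y0 ω = false ∧ D ω = false ∧ X ω = x})
                ((mY false).inter ((mD' false).inter (mX' x))) hA).symm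
          _ = ∑' a'' : 𝒜, (pr P {ω | Y0 ω = false ∧ X ω = x} / pr P {ω | X ω = x} *
                pr P {ω | A ω = a'' ∧ D ω = false ∧ X ω = x}) :=
              tsum_congr fun a'' => (prE _
                {ω | Y0 ω = false ∧ A ω = a'' ∧ D ω = false ∧ X ω = x}
                (fun ω => by simp only [Set.mem_setOf_eq]; try tauto)).trans (hprod a'' false)
          _ = _ := by rw [tsum_mul_left, hsumA]
      have hk : 0 < pr P {ω | D ω = false ∧ X ω = x} := hposDX x hq
      have hmu : cpr P {ω | Y ω = false} {ω | D ω = false ∧ X ω = x} =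
          pr P {ω | Y0 ω = false ∧ X ω = x} / pr P {ω | X ω = x} := by
        unfold cpr
        have eN : pr P ({ω | Y ω = false} ∩ {ω | D ω = false ∧ X ω = x}) =
            pr P {ω | D ω = false ∧ Y ω = false ∧ X ω = x} :=
          prE _ _ (fun ω => by simp only [Set.mem_inter_iff, Set.mem_setOf_eq]; try tauto)
        rw [eN, hconsP (fun ω => X ω = x), hYD, mul_div_cancel_right₀ _ (ne_of_gt hk)]
      have hYA : pr P {ω | Y0 ω = false ∧ A ω = a ∧ X ω = x} =
          pr P {ω | Y0 ω = false ∧ X ω = x} / pr P {ω | X ω = x} *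
            pr P {ω | A ω = a ∧ X ω = x} := by
        have b1 := pr_bool_split P (E := {ω | Y0 ω = false ∧ A ω = a ∧ X ω = x})
          ((mY false).inter ((mA a).inter (mX' x))) hD
        have b2 := pr_bool_split P (E := {ω | A ω = a ∧ X ω = x})
          ((mA a).inter (mX' x)) hD
        have c1 : pr P {ω | ω ∈ {ω | Y0 ω = false ∧ A ω = a ∧ X ω = x} ∧ D ω = false} =
            pr P {ω | Y0 ω = false ∧ X ω = x} / pr P {ω | X ω = x} *
              pr P {ω | A ω = a ∧ D ω = false ∧ X ω = x} :=
          (prE _ {ω | Y0 ω = false ∧ A ω = a ∧ D ω = false ∧ X ω = x}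
            (fun ω => by simp only [Set.mem_setOf_eq]; try tauto)).trans (hprod a false)
        have c2 : pr P {ω | ω ∈ {ω | Y0 ω = false ∧ A ω = a ∧ X ω = x} ∧ D ω = true} =
            pr P {ω | Y0 ω = false ∧ X ω = x} / pr P {ω | X ω = x} *
              pr P {ω | A ω = a ∧ D ω = true ∧ X ω = x} :=
          (prE _ {ω | Y0 ω = false ∧ A ω = a ∧ D ω = true ∧ X ω = x}
            (fun ω => by simp only [Set.mem_setOf_eq]; try tauto)).trans (hprod a true)
        have d1 : pr P {ω | ω ∈ {ω | A ω = a ∧ X ω = x} ∧ D ω = false} =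
            pr P {ω | A ω = a ∧ D ω = false ∧ X ω = x} :=
          prE _ _ (fun ω => by simp only [Set.mem_setOf_eq]; try tauto)
        have d2 : pr P {ω | ω ∈ {ω | A ω = a ∧ X ω = x} ∧ D ω = true} =
            pr P {ω | A ω = a ∧ D ω = true ∧ X ω = x} :=
          prE _ _ (fun ω => by simp only [Set.mem_setOf_eq]; try tauto)
        rw [← b1, ← b2, c1, c2, d1, d2]; ring
      have hAx : cpr P {ω | A ω = a} {ω | X ω = x} =
          pr P {ω | A ω = a ∧ X ω = x} / pr P {ω | X ω = x} := by
        unfold cpr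
        rw [prE ({ω | A ω = a} ∩ {ω | X ω = x}) {ω | A ω = a ∧ X ω = x}
          (fun ω => by simp only [Set.mem_inter_iff, Set.mem_setOf_eq]; try tauto)]
      constructor
      · rw [hmu, hAx]
        have harith : pr P {ω | Y0 ω = false ∧ X ω = x} / pr P {ω | X ω = x} *
            (pr P {ω | A ω = a ∧ X ω = x} / pr P {ω | X ω = x}) * pr P {ω | X ω = x} =
            pr P {ω | Y0 ω = false ∧ X ω = x} / pr P {ω | X ω = x} *
            pr P {ω | A ω = a ∧ X ω = x} := by field_simp
        rw [harith, ← hYA]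
        exact prE _ _ (fun ω => by simp only [Set.mem_setOf_eq]; try tauto)
      · rw [hmu, div_mul_cancel₀ _ hqne]
        exact prE _ _ (fun ω => by simp only [Set.mem_setOf_eq]; try tauto)
    · have hq0 : pr P {ω | X ω = x} = 0 := le_antisymm (not_lt.1 hq) (pr_nonneg P _)
      constructor
      · have h2 : pr P {ω | ω ∈ {ω | Y0 ω = false ∧ A ω = a} ∧ X ω = x} = 0 :=
          pr_zero_of_subset P (fun ω hω => hω.2) hq0
        rw [hq0, h2, mul_zero]
      · have h2 : pr P {ω | ω ∈ {ω | Y0 ω = false} ∧ X ω = x} = 0 :=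
          pr_zero_of_subset P (fun ω hω => hω.2) hq0
        rw [hq0, h2, mul_zero]
  ---------------------------------------------------------------- final sums
  have hN2 : (∑' x : 𝒳,
      cpr P {ω | Y ω = false} {ω | D ω = false ∧ S ω = true ∧ X ω = x} *
        pr P {ω | A ω = a ∧ S ω = true ∧ X ω = x}) =
      pr P {ω | Y0 ω = false ∧ A ω = a ∧ S ω = true} :=
    (tsum_congr fun x => (key2 x).1).trans
      (pr_tsum_fiber P (E := {ω | Y0 ω = false ∧ A ω = a ∧ S ω = true})
        ((mY false).inter ((mA a).inter (mS' true))) hX)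
  have hD2 : (∑' x : 𝒳,
      cpr P {ω | Y ω = false} {ω | D ω = false ∧ S ω = true ∧ X ω = x} *
        pr P {ω | S ω = true ∧ X ω = x}) =
      pr P {ω | Y0 ω = false ∧ S ω = true} :=
    (tsum_congr fun x => (key2 x).2).trans
      (pr_tsum_fiber P (E := {ω | Y0 ω = false ∧ S ω = true})
        ((mY false).inter (mS' true)) hX)
  have hN3 : (∑' x : 𝒳,
      cpr P {ω | Y ω = false} {ω | D ω = false ∧ X ω = x} *
        cpr P {ω | A ω = a} {ω | X ω = x} * pr P {ω | X ω = x}) =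
      pr P {ω | Y0 ω = false ∧ A ω = a} :=
    (tsum_congr fun x => (key3 x).1).trans
      (pr_tsum_fiber P (E := {ω | Y0 ω = false ∧ A ω = a})
        ((mY false).inter (mA a)) hX)
  have hD3 : (∑' x : 𝒳,
      cpr P {ω | Y ω = false} {ω | D ω = false ∧ X ω = x} * pr P {ω | X ω = x}) =
      pr P {ω | Y0 ω = false} :=
    (tsum_congr fun x => (key3 x).2).trans
      (pr_tsum_fiber P (E := {ω | Y0 ω = false}) (mY false) hX)
  ---------------------------------------------------------------- finale
  rw [hN1, hD1, hN2, hD2, hN3, hD3]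
  unfold cpr
  rw [prE ({ω | S ω = true} ∩ {ω | Y0 ω = false ∧ A ω = a})
    {ω | Y0 ω = false ∧ A ω = a ∧ S ω = true}
    (fun ω => by simp only [Set.mem_inter_iff, Set.mem_setOf_eq]; try tauto)]
  have hC : 0 < pr P {ω | Y0 ω = false} :=
    lt_of_lt_of_le hpos1 (pr_mono P fun ω hω => hω.1)
  have n1 := ne_of_gt hpos1
  have n2 := ne_of_gt hpos2
  have n3 := ne_of_gt hC
  field_simp
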